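/- Let N ≥ 1. In M_N^B × M_N^B with the tensor-product operators (1 ≤ l ≤ N by the tensor rule, l = 0 by the super rule), the elements x ⊗ y satisfying f̃_i(x ⊗ y) = 0 for all 0 ≤ i ≤ N are exactly the following: ((+,…,+), 0) ⊗ ((−,…,−), k) for each k ∈ ℤ_{≥0}; ((+,…,+), 0) ⊗ ((+^j, −^{N−j}), 0) for each 1 ≤ j ≤ N−1, where (+^j, −^{N−j}) has first j entries + and last N−j entries −; and ((+,…,+), 0) ⊗ ((+,…,+), 0). -/

import Mathlib

namespace CrystalPaper

/-- A sign sequence of length `N`: `true` codes `+`, `false` codes `−`. -/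
abbrev Seq (N : ℕ) := Fin N → Bool

/-- The constant sequence `(+,…,+)`. -/
def top (N : ℕ) : Seq N := fun _ => true

/-- The constant sequence `(−,…,−)`. -/
def bot (N : ℕ) : Seq N := fun _ => false

/-- The sequence `(+^k, −^{N−k})` (first `k` entries `+`, the rest `−`). -/
def lowSeq (N k : ℕ) : Seq N := fun i => decide ((i : ℕ) < k)

/-- The number of `−` entries of a sign sequence. -/
def minusCount (N : ℕ) (b : Seq N) : ℕ :=
  (Finset.univ.filter (fun i => b i = false)).card

/-- `B_sp^+`: sign sequences with an even number of `−` entries. -/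
def BspPlus (N : ℕ) (b : Seq N) : Prop := Even (minusCount N b)

/-- `B_sp^−`: sign sequences with an odd number of `−` entries. -/
def BspMinus (N : ℕ) (b : Seq N) : Prop := Odd (minusCount N b)

/-- The type-`B_N` Kashiwara raising operator `ẽ_l`, labels `1 ≤ l ≤ N`.
For `1 ≤ l ≤ N−1` it replaces `(b_l, b_{l+1}) = (+,−)` by `(−,+)`;
`ẽ_N` replaces `b_N = +` by `−`. -/
def eB (N l : ℕ) (b : Seq N) : Option (Seq N) :=
  if h : 1 ≤ l ∧ l + 1 ≤ N then
    let i : Fin N := ⟨l - 1, by omega⟩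
    let j : Fin N := ⟨l, by omega⟩
    if b i = true ∧ b j = false then
      some (Function.update (Function.update b i false) j true)
    else none
  else if h2 : l = N ∧ 1 ≤ N then
    let i : Fin N := ⟨N - 1, by omega⟩
    if b i = true then some (Function.update b i false) else none
  else none

/-- The type-`B_N` Kashiwara lowering operator `f̃_l`, labels `1 ≤ l ≤ N`.
For `1 ≤ l ≤ N−1` it replaces `(b_l, b_{l+1}) = (−,+)` by `(+,−)`;
`f̃_N` replaces `b_N = −` by `+`. -/
def fB (N l : ℕ) (b : Seq N) : Option (Seq N) :=
  if h : 1 ≤ l ∧ l + 1 ≤ N then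
    let i : Fin N := ⟨l - 1, by omega⟩
    let j : Fin N := ⟨l, by omega⟩
    if b i = false ∧ b j = true then
      some (Function.update (Function.update b i true) j false)
    else none
  else if h2 : l = N ∧ 1 ≤ N then
    let i : Fin N := ⟨N - 1, by omega⟩
    if b i = false then some (Function.update b i true) else none
  else none

/-- `n`-fold iteration of a partial operator. -/
def iterOp {σ : Type*} (f : σ → Option σ) : ℕ → σ → Option σ
  | 0, x => some x
  | n + 1, x => (f x).bind (iterOp f n)

/-- `max {n ≥ 0 : f^n x ≠ 0}`, as a supremum in `ℕ`.  Used for the string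
lengths `ε_l(x) = max{n : ẽ_l^n x ≠ 0}` and `φ_l(x) = max{n : f̃_l^n x ≠ 0}`. -/
noncomputable def opMax {σ : Type*} (f : σ → Option σ) (x : σ) : ℕ :=
  sSup {n | iterOp f n x ≠ none}

/-- Elements of the combinatorial model `M_N^B` of `B(−ω_N)` for `U_q(B(N,1))`:
all pairs of a sign sequence and a non-negative integer. -/
abbrev MSeqB (N : ℕ) := Seq N × ℕ

/-- The operators `ẽ_l`, `0 ≤ l ≤ N`, on the model `M_N^B`. -/
def eSB (N l : ℕ) (x : MSeqB N) : Option (MSeqB N) :=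
  if l = 0 then
    if h : 1 ≤ N then
      if x.1 ⟨0, h⟩ = false then some (Function.update x.1 ⟨0, h⟩ true, x.2 + 1) else none
    else none
  else (eB N l x.1).map fun b => (b, x.2)

/-- The operators `f̃_l`, `0 ≤ l ≤ N`, on the model `M_N^B`. -/
def fSB (N l : ℕ) (x : MSeqB N) : Option (MSeqB N) :=
  if l = 0 then
    if h : 1 ≤ N then
      if x.1 ⟨0, h⟩ = true ∧ 1 ≤ x.2 then some (Function.update x.1 ⟨0, h⟩ false, x.2 - 1)
      else none
    else none
  else (fB N l x.1).map fun b => (b, x.2)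

/-- `⟨h_0, (b,k)⟩ = k` if `b_1 = +`, and `k + 1` if `b_1 = −`. -/
def hZeroB (N : ℕ) (x : MSeqB N) : ℕ :=
  if h : 1 ≤ N then (if x.1 ⟨0, h⟩ = true then x.2 else x.2 + 1) else x.2

/-- The tensor-product lowering operators on `M_N^B × M_N^B`:
the super rule for `l = 0`, the tensor rule for `1 ≤ l ≤ N`. -/
noncomputable def tfSB (N l : ℕ) (p : MSeqB N × MSeqB N) : Option (MSeqB N × MSeqB N) :=
  if l = 0 then
    if hZeroB N p.1 = 0 then (fSB N 0 p.2).map fun y => (p.1, y)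
    else (fSB N 0 p.1).map fun x => (x, p.2)
  else
    if opMax (eSB N l) p.1 < opMax (fSB N l) p.2 then (fSB N l p.2).map fun y => (p.1, y)
    else (fSB N l p.1).map fun x => (x, p.2)

/-! ### Auxiliary lemmas -/

lemma opMax_eq_zero {σ : Type*} (f : σ → Option σ) (x : σ) (h : f x = none) :
    opMax f x = 0 := by
  have hs : {n | iterOp f n x ≠ none} = {0} := by
    ext n
    cases n with
    | zero => simp [iterOp]
    | succ n => simp [iterOp, h]
  rw [opMax, hs, csSup_singleton]

lemma opMax_eq_one {σ : Type*} (f : σ → Option σ) (x x' : σ) (h : f x = some x')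
    (h' : f x' = none) : opMax f x = 1 := by
  have hs : {n | iterOp f n x ≠ none} = Set.Iic 1 := by
    ext n
    match n with
    | 0 => simp [iterOp]
    | 1 => simp [iterOp, h]
    | (n + 2) =>
      simp only [Set.mem_setOf_eq, iterOp, h, Option.bind_some, h', Option.bind_none,
        ne_eq, not_true_eq_false, false_iff, Set.mem_Iic]
      omega
  rw [opMax, hs, csSup_Iic]

lemma fB_small_iff {N : ℕ} (l : ℕ) (h1 : 1 ≤ l) (h2 : l + 1 ≤ N) (b : Seq N) :
    fB N l b = none ↔ ¬(b ⟨l - 1, by omega⟩ = false ∧ b ⟨l, by omega⟩ = true) := by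
  simp only [fB]
  rw [dif_pos ⟨h1, h2⟩]
  split <;> simp_all

lemma fB_last_iff {N : ℕ} (hN : 1 ≤ N) (b : Seq N) :
    fB N N b = none ↔ b ⟨N - 1, by omega⟩ = true := by
  have hx : ¬(1 ≤ N ∧ N + 1 ≤ N) := by omega
  simp only [fB]
  rw [dif_neg hx, dif_pos ⟨by trivial, hN⟩]
  split <;> simp_all

lemma eB_small_iff {N : ℕ} (l : ℕ) (h1 : 1 ≤ l) (h2 : l + 1 ≤ N) (b : Seq N) :
    eB N l b = none ↔ ¬(b ⟨l - 1, by omega⟩ = true ∧ b ⟨l, by omega⟩ = false) := by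
  simp only [eB]
  rw [dif_pos ⟨h1, h2⟩]
  split <;> simp_all

lemma eB_last_iff {N : ℕ} (hN : 1 ≤ N) (b : Seq N) :
    eB N N b = none ↔ b ⟨N - 1, by omega⟩ = false := by
  have hx : ¬(1 ≤ N ∧ N + 1 ≤ N) := by omega
  simp only [eB]
  rw [dif_neg hx, dif_pos ⟨by trivial, hN⟩]
  split <;> simp_all

lemma fB_twice {N : ℕ} (l : ℕ) (b b' : Seq N) (h : fB N l b = some b') :
    fB N l b' = none := by
  by_cases h1 : 1 ≤ l ∧ l + 1 ≤ N
  · have hij : (⟨l - 1, by omega⟩ : Fin N) ≠ (⟨l, by omega⟩ : Fin N) := by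
      simp only [ne_eq, Fin.mk.injEq]; omega
    simp only [fB, dif_pos h1] at h ⊢
    split at h
    · rw [Option.some_inj] at h
      subst h
      simp [Function.update_apply, hij]
    · exact absurd h (by simp)
  · by_cases h2 : l = N ∧ 1 ≤ N
    · simp only [fB, dif_neg h1, dif_pos h2] at h ⊢
      split at h
      · rw [Option.some_inj] at h
        subst h
        simp [Function.update_apply]
      · exact absurd h (by simp)
    · simp only [fB, dif_neg h1, dif_neg h2] at h
      exact absurd h (by simp)

lemma eB_twice {N : ℕ} (l : ℕ) (b b' : Seq N) (h : eB N l b = some b') :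
    eB N l b' = none := by
  by_cases h1 : 1 ≤ l ∧ l + 1 ≤ N
  · have hij : (⟨l - 1, by omega⟩ : Fin N) ≠ (⟨l, by omega⟩ : Fin N) := by
      simp only [ne_eq, Fin.mk.injEq]; omega
    simp only [eB, dif_pos h1] at h ⊢
    split at h
    · rw [Option.some_inj] at h
      subst h
      simp [Function.update_apply, hij]
    · exact absurd h (by simp)
  · by_cases h2 : l = N ∧ 1 ≤ N
    · simp only [eB, dif_neg h1, dif_pos h2] at h ⊢
      split at h
      · rw [Option.some_inj] at h
        subst h
        simp [Function.update_apply]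
      · exact absurd h (by simp)
    · simp only [eB, dif_neg h1, dif_neg h2] at h
      exact absurd h (by simp)

lemma opMax_fSB {N : ℕ} (l : ℕ) (hl : 1 ≤ l) (y : MSeqB N) :
    opMax (fSB N l) y = if fB N l y.1 = none then 0 else 1 := by
  have hne : l ≠ 0 := by omega
  rcases hb : fB N l y.1 with _ | b'
  · rw [if_pos rfl]
    exact opMax_eq_zero _ _ (by simp [fSB, hne, hb])
  · rw [if_neg (by simp [hb])]
    refine opMax_eq_one _ _ (b', y.2) (by simp [fSB, hne, hb]) ?_
    simp [fSB, hne, fB_twice l y.1 b' hb]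

lemma opMax_eSB {N : ℕ} (l : ℕ) (hl : 1 ≤ l) (x : MSeqB N) :
    opMax (eSB N l) x = if eB N l x.1 = none then 0 else 1 := by
  have hne : l ≠ 0 := by omega
  rcases hb : eB N l x.1 with _ | b'
  · rw [if_pos rfl]
    exact opMax_eq_zero _ _ (by simp [eSB, hne, hb])
  · rw [if_neg (by simp [hb])]
    refine opMax_eq_one _ _ (b', x.2) (by simp [eSB, hne, hb]) ?_
    simp [eSB, hne, eB_twice l x.1 b' hb]

lemma tf_none_iff {N : ℕ} (l : ℕ) (h1 : 1 ≤ l) (x y : MSeqB N) :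
    tfSB N l (x, y) = none ↔
      (fB N l x.1 = none ∧ (fB N l y.1 = none ∨ eB N l x.1 ≠ none)) := by
  have hne : l ≠ 0 := by omega
  simp only [tfSB, if_neg hne, opMax_fSB l h1, opMax_eSB l h1]
  rcases hfy : fB N l y.1 with _ | b' <;> rcases hex : eB N l x.1 with _ | c' <;>
    simp [hfy, hex, fSB, hne] <;> tauto

lemma tf0_none_iff {N : ℕ} (hN : 1 ≤ N) (x y : MSeqB N) :
    tfSB N 0 (x, y) = none ↔
      ((x.1 ⟨0, hN⟩ = true ∧ x.2 = 0 ∧ (y.1 ⟨0, hN⟩ = false ∨ y.2 = 0)) ∨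
        x.1 ⟨0, hN⟩ = false) := by
  simp only [tfSB, if_pos rfl, hZeroB, dif_pos hN, fSB, dif_pos hN]
  rcases hx0 : x.1 ⟨0, hN⟩ with _ | _ <;> rcases hy0 : y.1 ⟨0, hN⟩ with _ | _ <;>
    by_cases hx2 : x.2 = 0 <;> by_cases hy2 : y.2 = 0 <;>
      simp_all <;> omega

/-- For `N ≥ 1`, the lowest weight elements of `M_N^B × M_N^B` (the
model of `B(−ω_N) ⊗ B(−ω_N)` for `U_q(B(N,1))`), i.e. the elements killed by all
tensor-product operators `f̃_i`, `0 ≤ i ≤ N`, are exactly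
`((+,…,+),0) ⊗ ((−,…,−),k)` for `k ∈ ℤ_{≥0}`,
`((+,…,+),0) ⊗ ((+^j,−^{N−j}),0)` for `1 ≤ j ≤ N−1`, and
`((+,…,+),0) ⊗ ((+,…,+),0)`. -/
theorem lowest_weight_MB_tensor_MB (N : ℕ) (hN : 1 ≤ N) (x y : MSeqB N) :
    (∀ i, i ≤ N → tfSB N i (x, y) = none) ↔
      (x = (top N, 0) ∧
        ((∃ k, y = (bot N, k)) ∨
          (∃ j, 1 ≤ j ∧ j ≤ N - 1 ∧ y = (lowSeq N j, 0)) ∨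
          y = (top N, 0))) := by
  constructor
  · intro hall
    have hxf : ∀ l, 1 ≤ l → l ≤ N → fB N l x.1 = none := fun l h1 h2 =>
      ((tf_none_iff l h1 x y).mp (hall l h2)).1
    have key : ∀ d, d ≤ N - 1 → x.1 ⟨N - 1 - d, by omega⟩ = true := by
      intro d
      induction d with
      | zero =>
        intro _
        exact (fB_last_iff hN x.1).mp (hxf N hN le_rfl)
      | succ d ih =>
        intro hd
        have hih := ih (by omega)
        have hl1 : 1 ≤ N - 1 - d := by omega
        have hl2 : (N - 1 - d) + 1 ≤ N := by omega
        have hno := (fB_small_iff (N - 1 - d) hl1 hl2 x.1).mp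
          (hxf (N - 1 - d) hl1 (by omega))
        rcases Bool.eq_false_or_eq_true (x.1 ⟨N - 1 - (d + 1), by omega⟩) with ht | hf
        · exact ht
        · exfalso
          apply hno
          constructor
          · have heq : (⟨N - 1 - d - 1, by omega⟩ : Fin N) =
                (⟨N - 1 - (d + 1), by omega⟩ : Fin N) := by
              rw [Fin.mk.injEq]; omega
            rw [heq]; exact hf
          · exact hih
    have hxtop : ∀ i : Fin N, x.1 i = true := by
      intro i
      have hiN := i.isLt
      have h := key (N - 1 - i.val) (by omega)
      have heq : (⟨N - 1 - (N - 1 - i.val), by omega⟩ : Fin N) = i := by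
        rw [Fin.ext_iff]; simp; omega
      rwa [heq] at h
    have h0 := (tf0_none_iff hN x y).mp (hall 0 (by omega))
    rcases h0 with ⟨-, hx2, hy0⟩ | hx0'
    case inr => exact absurd hx0' (by simp [hxtop])
    have hx1 : x.1 = top N := funext fun i => hxtop i
    have hxeq : x = (top N, 0) := by rw [Prod.ext_iff]; exact ⟨hx1, hx2⟩
    refine ⟨hxeq, ?_⟩
    have hyf : ∀ l, 1 ≤ l → l + 1 ≤ N → fB N l y.1 = none := by
      intro l h1 h2
      rcases ((tf_none_iff l h1 x y).mp (hall l (by omega))).2 with h | h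
      · exact h
      · exfalso
        apply h
        rw [hx1, eB_small_iff l h1 h2]
        simp [top]
    have hprop : ∀ d (i : Fin N), ∀ hd : i.val + d < N, y.1 i = false →
        y.1 ⟨i.val + d, hd⟩ = false := by
      intro d
      induction d with
      | zero => intro i hd hf; exact hf
      | succ d ih =>
        intro i hd hf
        have hprev := ih i (by omega) hf
        have hno := (fB_small_iff (i.val + d + 1) (by omega) (by omega) y.1).mp
          (hyf _ (by omega) (by omega))
        rcases Bool.eq_false_or_eq_true (y.1 ⟨i.val + (d + 1), hd⟩) with h | h
        · exact absurd ⟨hprev, h⟩ hno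
        · exact h
    have hprop' : ∀ i j : Fin N, i.val ≤ j.val → y.1 i = false → y.1 j = false := by
      intro i j hij hf
      have hjN := j.isLt
      have hj : j = ⟨i.val + (j.val - i.val), by omega⟩ := by
        rw [Fin.ext_iff]; simp; omega
      rw [hj]
      exact hprop _ i _ hf
    rcases Bool.eq_false_or_eq_true (y.1 ⟨0, hN⟩) with hy00 | hy00
    · have hy2 : y.2 = 0 := by
        rcases hy0 with h | h
        · rw [hy00] at h; exact absurd h (by simp)
        · exact h
      by_cases hytop : ∀ i : Fin N, y.1 i = true
      · right; right
        rw [Prod.ext_iff]; exact ⟨funext fun i => hytop i, hy2⟩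
      · right; left
        push_neg at hytop
        obtain ⟨i0, hi0⟩ := hytop
        have hi0' : y.1 i0 = false := by simpa using hi0
        classical
        have hex : ∃ n : ℕ, ∃ h : n < N, y.1 ⟨n, h⟩ = false := ⟨i0.val, i0.isLt, hi0'⟩
        obtain ⟨hjN, hjf⟩ := Nat.find_spec hex
        have hmin : ∀ m, m < Nat.find hex → ∀ h : m < N, y.1 ⟨m, h⟩ = true := by
          intro m hm h
          have hnm := Nat.find_min hex hm
          push_neg at hnm
          simpa using hnm h
        have hj1 : 1 ≤ Nat.find hex := by
          rcases Nat.eq_zero_or_pos (Nat.find hex) with h0 | hpos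
          · exfalso
            obtain ⟨hh, hf0⟩ := (Nat.find_eq_zero hex).mp h0
            have hcon : y.1 ⟨0, hN⟩ = false := hf0
            rw [hy00] at hcon
            exact absurd hcon (by simp)
          · exact hpos
        refine ⟨Nat.find hex, hj1, by omega, ?_⟩
        rw [Prod.ext_iff]
        refine ⟨funext fun i => ?_, hy2⟩
        by_cases hij : i.val < Nat.find hex
        · have := hmin i.val hij i.isLt
          simp [lowSeq, hij, this]
        · have hf : y.1 i = false := hprop' ⟨Nat.find hex, hjN⟩ i (by simpa using hij) hjf
          simp [lowSeq, hij, hf]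
    · left
      refine ⟨y.2, ?_⟩
      have hy1 : y.1 = bot N := funext fun i => hprop' ⟨0, hN⟩ i (Nat.zero_le _) hy00
      rw [Prod.ext_iff]; exact ⟨hy1, rfl⟩
  · rintro ⟨hxeq, hy⟩
    subst hxeq
    intro i hi
    rcases Nat.eq_zero_or_pos i with hi0 | hi1
    · subst hi0
      rw [tf0_none_iff hN]
      left
      refine ⟨rfl, rfl, ?_⟩
      rcases hy with ⟨k, hk⟩ | ⟨j, hj1, hj2, hk⟩ | hk <;> subst hk
      · exact Or.inl rfl
      · exact Or.inr rfl
      · exact Or.inr rfl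
    · rw [tf_none_iff i hi1]
      constructor
      · by_cases hiN : i + 1 ≤ N
        · rw [fB_small_iff i hi1 hiN]; simp [top]
        · have hieq : i = N := by omega
          subst hieq
          rw [fB_last_iff hN]; rfl
      · by_cases hiN : i + 1 ≤ N
        · left
          rw [fB_small_iff i hi1 hiN]
          rcases hy with ⟨k, hk⟩ | ⟨j, hj1, hj2, hk⟩ | hk <;> subst hk <;>
            simp [bot, top, lowSeq] <;> omega
        · right
          have hieq : i = N := by omega
          subst hieq
          rw [Ne, eB_last_iff hN]
          simp [top]

end CrystalPaper
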